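/- If dim V = d < n, then the kernel of the algebra homomorphism ℂ[S_n] → End(V^⊗n) induced by the permutation action is the two-sided ideal generated by the antisymmetrizer A_{d+1} = Σ_{σ∈S_{d+1}} sign(σ)·σ, where S_{d+1} is embedded in S_n as permutations of the first d+1 letters. -/

import Mathlib

set_option linter.unusedSectionVars false

open scoped TensorProduct PiTensorProduct

/-- The monoid homomorphism `Sₙ → End(V^⊗n)` given by permuting tensor factors. -/
noncomputable def tensorPermHom (n : ℕ) (V : Type*) [AddCommGroup V] [Module ℂ V] :
    Equiv.Perm (Fin n) →* Module.End ℂ (⨂[ℂ] _ : Fin n, V) where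
  toFun σ := (PiTensorProduct.reindex ℂ (fun _ : Fin n => V) σ).toLinearMap
  map_one' := by
    ext x
    simp [Equiv.Perm.one_def, PiTensorProduct.reindex_refl]
  map_mul' σ τ := by
    ext x
    simp [Equiv.Perm.mul_def, ← PiTensorProduct.reindex_trans, LinearEquiv.trans_apply,
      Module.End.mul_apply]

/-- The antisymmetrizer `A_{d+1} = Σ_{σ ∈ S_{d+1}} sign(σ)·σ ∈ ℂ[Sₙ]`, where `S_{d+1}`
is embedded in `Sₙ` as the permutations of the first `d+1` letters (fixing the rest). -/
noncomputable def antisymmetrizer (n d : ℕ) (h : d + 1 ≤ n) :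
    MonoidAlgebra ℂ (Equiv.Perm (Fin n)) :=
  ∑ σ : Equiv.Perm (Fin (d + 1)), ((Equiv.Perm.sign σ : ℤ) : ℂ) •
    MonoidAlgebra.of ℂ (Equiv.Perm (Fin n))
      (σ.viaFintypeEmbedding (Fin.castLEEmb h))


open Equiv Finset

namespace SWaux

lemma nat_geom (n m : ℕ) : ∑ k ∈ Finset.range m, (n-1) * n^k = n^m - 1 := by
  induction m with
  | zero => simp
  | succ m ih =>
    rcases Nat.eq_zero_or_pos n with hn | hn
    · subst hn; simp [Nat.zero_pow]
    rw [Finset.sum_range_succ, ih, Nat.sub_mul, one_mul]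
    have h1 : 1 ≤ n ^ m := Nat.one_le_pow _ _ hn
    have h2 : n ^ m ≤ n * n ^ m := Nat.le_mul_of_pos_left _ hn
    have h3 : n ^ (m+1) = n * n ^ m := by rw [pow_succ, mul_comm]
    omega

variable {n : ℕ}

/-- Base-`n` encoding of the one-line word of a permutation, most significant digit first. -/
def key (σ : Equiv.Perm (Fin n)) : ℕ := ∑ i : Fin n, (σ i : ℕ) * n ^ (n - 1 - (i : ℕ))

lemma digit_sum_lt (hn : 0 < n) (σ : Equiv.Perm (Fin n)) (s : Finset (Fin n)) (m : ℕ)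
    (hs : ∀ i ∈ s, n - 1 - (i : ℕ) < m) :
    ∑ i ∈ s, (σ i : ℕ) * n ^ (n - 1 - (i : ℕ)) < n ^ m := by
  have hinj : Set.InjOn (fun i : Fin n => n - 1 - (i : ℕ)) s := by
    intro a _ b _ hab
    have ha : (a : ℕ) ≤ n - 1 := Nat.le_sub_one_of_lt a.isLt
    have hb : (b : ℕ) ≤ n - 1 := Nat.le_sub_one_of_lt b.isLt
    simp only at hab
    exact Fin.ext (by omega)
  calc ∑ i ∈ s, (σ i : ℕ) * n ^ (n - 1 - (i : ℕ))
      ≤ ∑ i ∈ s, (n - 1) * n ^ (n - 1 - (i : ℕ)) := by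
        refine Finset.sum_le_sum fun i _ => Nat.mul_le_mul_right _ ?_
        exact Nat.le_sub_one_of_lt (σ i).isLt
    _ = ∑ k ∈ s.image (fun i : Fin n => n - 1 - (i : ℕ)), (n - 1) * n ^ k := by
        rw [Finset.sum_image (fun a ha b hb => hinj ha hb)]
    _ ≤ ∑ k ∈ Finset.range m, (n - 1) * n ^ k := by
        refine Finset.sum_le_sum_of_subset ?_
        intro k hk
        simp only [Finset.mem_image] at hk
        obtain ⟨i, hi, rfl⟩ := hk
        exact Finset.mem_range.2 (hs i hi)
    _ = n ^ m - 1 := nat_geom n m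
    _ < n ^ m := by
        have : 1 ≤ n ^ m := Nat.one_le_pow _ _ hn
        omega

lemma key_lt_pow (hn : 0 < n) (σ : Equiv.Perm (Fin n)) : key σ < n ^ n := by
  refine digit_sum_lt hn σ Finset.univ n fun i _ => ?_
  have := i.isLt
  omega

lemma key_lt_key (hn : 0 < n) {σ σ' : Equiv.Perm (Fin n)} (q : Fin n)
    (heq : ∀ p, p < q → σ p = σ' p) (hlt : σ q < σ' q) : key σ < key σ' := by
  classical
  have hsplit : ∀ τ : Equiv.Perm (Fin n), key τ =
      (∑ i ∈ Finset.univ.filter (· < q), (τ i : ℕ) * n ^ (n - 1 - (i : ℕ)))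
      + (τ q : ℕ) * n ^ (n - 1 - (q : ℕ))
      + ∑ i ∈ Finset.univ.filter (q < ·), (τ i : ℕ) * n ^ (n - 1 - (i : ℕ)) := by
    intro τ
    rw [key]
    rw [← Finset.sum_filter_add_sum_filter_not Finset.univ (· < q)]
    have : Finset.univ.filter (fun i : Fin n => ¬ i < q)
        = insert q (Finset.univ.filter (q < ·)) := by
      ext i
      simp only [Finset.mem_filter, Finset.mem_univ, true_and, Finset.mem_insert, not_lt]
      constructor
      · intro hi
        rcases eq_or_lt_of_le hi with h' | h'
        · exact Or.inl h'.symm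
        · exact Or.inr h'
      · rintro (rfl | hi)
        · exact le_refl _
        · exact le_of_lt hi
    rw [this, Finset.sum_insert (by simp)]
    ring
  rw [hsplit σ, hsplit σ']
  have h1 : (∑ i ∈ Finset.univ.filter (· < q), (σ i : ℕ) * n ^ (n - 1 - (i : ℕ)))
      = ∑ i ∈ Finset.univ.filter (· < q), (σ' i : ℕ) * n ^ (n - 1 - (i : ℕ)) := by
    refine Finset.sum_congr rfl fun i hi => ?_
    rw [heq i (Finset.mem_filter.1 hi).2]
  rw [h1]
  have htail : ∑ i ∈ Finset.univ.filter (q < ·), (σ i : ℕ) * n ^ (n - 1 - (i : ℕ))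
      < n ^ (n - 1 - (q : ℕ)) := by
    refine digit_sum_lt hn σ _ _ fun i hi => ?_
    have hq : q < i := (Finset.mem_filter.1 hi).2
    have h1 : (i : ℕ) ≤ n - 1 := Nat.le_sub_one_of_lt i.isLt
    have h2 : (q : ℕ) < (i : ℕ) := hq
    omega
  have hmid : (σ q : ℕ) * n ^ (n - 1 - (q : ℕ)) + n ^ (n - 1 - (q : ℕ))
      ≤ (σ' q : ℕ) * n ^ (n - 1 - (q : ℕ)) := by
    have : (σ q : ℕ) + 1 ≤ (σ' q : ℕ) := hlt
    calc (σ q : ℕ) * n ^ (n - 1 - (q : ℕ)) + n ^ (n - 1 - (q : ℕ))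
        = ((σ q : ℕ) + 1) * n ^ (n - 1 - (q : ℕ)) := by ring
      _ ≤ (σ' q : ℕ) * n ^ (n - 1 - (q : ℕ)) := Nat.mul_le_mul_right _ this
  omega

/-- `σ` has no decreasing subsequence of length `d+1`. -/
def Good (d : ℕ) (σ : Equiv.Perm (Fin n)) : Prop :=
  ¬ ∃ P : Finset (Fin n), P.card = d + 1 ∧ ∀ i ∈ P, ∀ j ∈ P, i < j → σ j < σ i

section Coloring

variable {d : ℕ} (σ : Equiv.Perm (Fin n))

/-- Length of the longest decreasing subsequence of `σ` ending at position `i`. -/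
noncomputable def dlen (i : Fin n) : ℕ :=
  (Finset.univ.filter (fun P : Finset (Fin n) =>
      i ∈ P ∧ (∀ a ∈ P, a ≤ i) ∧ ∀ a ∈ P, ∀ b ∈ P, a < b → σ b < σ a)).sup Finset.card

lemma singleton_mem_dlenSet (i : Fin n) : ({i} : Finset (Fin n)) ∈ (Finset.univ.filter (fun P : Finset (Fin n) =>
      i ∈ P ∧ (∀ a ∈ P, a ≤ i) ∧ ∀ a ∈ P, ∀ b ∈ P, a < b → σ b < σ a)) := by
  refine Finset.mem_filter.2 ⟨Finset.mem_univ _, Finset.mem_singleton_self i, ?_, ?_⟩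
  · intro a ha; rw [Finset.mem_singleton] at ha; exact le_of_eq ha
  · intro a ha b hb hab
    rw [Finset.mem_singleton] at ha hb
    subst ha; subst hb; exact absurd hab (lt_irrefl _)

lemma one_le_dlen (i : Fin n) : 1 ≤ dlen σ i := by
  have h := Finset.le_sup (f := Finset.card) (singleton_mem_dlenSet σ i)
  rw [Finset.card_singleton] at h
  exact h

lemma dlen_le (hg : Good d σ) (i : Fin n) : dlen σ i ≤ d := by
  refine Finset.sup_le fun P hP => ?_
  simp only [Finset.mem_filter, Finset.mem_univ, true_and] at hP
  by_contra hcard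
  push_neg at hcard
  obtain ⟨Q, hQP, hQcard⟩ := Finset.exists_subset_card_eq (show d + 1 ≤ P.card from hcard)
  exact hg ⟨Q, hQcard, fun a ha b hb hab => hP.2.2 a (hQP ha) b (hQP hb) hab⟩

lemma dlen_lt_dlen {i j : Fin n} (hij : i < j) (hv : σ j < σ i) :
    dlen σ i < dlen σ j := by
  classical
  set F := (Finset.univ.filter (fun P : Finset (Fin n) =>
      i ∈ P ∧ (∀ a ∈ P, a ≤ i) ∧ ∀ a ∈ P, ∀ b ∈ P, a < b → σ b < σ a)) with hF
  have hne : F.Nonempty := ⟨{i}, singleton_mem_dlenSet σ i⟩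
  obtain ⟨P, hPF, hPcard⟩ := Finset.exists_mem_eq_sup F hne Finset.card
  simp only [hF, Finset.mem_filter, Finset.mem_univ, true_and] at hPF
  obtain ⟨hiP, hle, hpat⟩ := hPF
  have hjP : j ∉ P := fun hj => absurd (hle j hj) (not_le.2 hij)
  have hmem : insert j P ∈ (Finset.univ.filter (fun P : Finset (Fin n) =>
      j ∈ P ∧ (∀ a ∈ P, a ≤ j) ∧ ∀ a ∈ P, ∀ b ∈ P, a < b → σ b < σ a)) := by
    simp only [Finset.mem_filter, Finset.mem_univ, true_and]
    refine ⟨Finset.mem_insert_self _ _, ?_, ?_⟩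
    · intro a ha
      rcases Finset.mem_insert.1 ha with rfl | ha
      · exact le_refl _
      · exact (hle a ha).trans hij.le
    · intro a ha b hb hab
      rcases Finset.mem_insert.1 hb with hb' | hb'
      · subst hb'
        have haP : a ∈ P := by
          rcases Finset.mem_insert.1 ha with ha' | ha'
          · exact absurd hab (by rw [ha']; exact lt_irrefl _)
          · exact ha'
        rcases eq_or_lt_of_le (hle a haP) with h' | h'
        · rw [h']; exact hv
        · exact hv.trans (hpat a haP i hiP h')
      · have haP : a ∈ P := by
          rcases Finset.mem_insert.1 ha with ha' | ha'
          · exact absurd hab (by rw [ha']; exact not_lt.2 ((hle b hb').trans hij.le))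
          · exact ha'
        exact hpat a haP b hb' hab
  have : (insert j P).card ≤ dlen σ j := Finset.le_sup (f := Finset.card) hmem
  rw [Finset.card_insert_of_notMem hjP] at this
  have hdi : dlen σ i = P.card := hPcard
  omega

end Coloring

section Extend

variable {k : ℕ}

/-- Extend a "matching" of two embeddings to a permutation. -/
noncomputable def extPerm (f g : Fin k ↪ Fin n) : Equiv.Perm (Fin n) := by
  classical
  exact (Equiv.sumCompl (· ∈ Set.range f)).symm.trans
    ((Equiv.sumCongr ((Equiv.ofInjective f f.injective).symm.trans (Equiv.ofInjective g g.injective))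
      (Fintype.equivOfCardEq (by
        have h1 : Fintype.card {x // x ∈ Set.range ⇑f} = k := by
          have hh := Set.card_range_of_injective f.injective
          rw [Fintype.card_fin] at hh
          convert hh using 2
        have h2 : Fintype.card {x // x ∈ Set.range ⇑g} = k := by
          have hh := Set.card_range_of_injective g.injective
          rw [Fintype.card_fin] at hh
          convert hh using 2
        rw [Fintype.card_subtype_compl, Fintype.card_subtype_compl, h1, h2]))).trans
    (Equiv.sumCompl (· ∈ Set.range g)))

lemma extPerm_apply (f g : Fin k ↪ Fin n) (a : Fin k) : extPerm f g (f a) = g a := by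
  classical
  simp only [extPerm, Equiv.trans_apply]
  rw [Equiv.sumCompl_symm_apply_of_pos (p := (· ∈ Set.range f)) ⟨a, rfl⟩]
  simp [Equiv.ofInjective_symm_apply]

end Extend

section Conj

variable {k : ℕ}

lemma conj_via (f g : Fin k ↪ Fin n) (u : Equiv.Perm (Fin n)) (hu : ∀ a, u (f a) = g a)
    (τ : Equiv.Perm (Fin k)) :
    u * τ.viaFintypeEmbedding f * u⁻¹ = τ.viaFintypeEmbedding g := by
  ext i
  by_cases hi : i ∈ Set.range ⇑g
  · obtain ⟨a, rfl⟩ := hi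
    have h1 : u⁻¹ (g a) = f a := by rw [← hu a]; simp
    rw [Equiv.Perm.mul_apply, Equiv.Perm.mul_apply, h1,
      Equiv.Perm.viaFintypeEmbedding_apply_image, hu,
      Equiv.Perm.viaFintypeEmbedding_apply_image]
  · have h2 : u⁻¹ i ∉ Set.range ⇑f := by
      rintro ⟨a, ha⟩
      exact hi ⟨a, by rw [← hu a, ha]; simp⟩
    rw [Equiv.Perm.mul_apply, Equiv.Perm.mul_apply,
      Equiv.Perm.viaFintypeEmbedding_apply_notMem_range _ _ h2,
      Equiv.Perm.viaFintypeEmbedding_apply_notMem_range _ _ hi]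
    simp

end Conj

section Antisym

variable {d : ℕ}

lemma single_mul_antisym (hdn : d + 1 ≤ n) (pemb : Fin (d+1) ↪ Fin n) (σ : Equiv.Perm (Fin n)) :
    MonoidAlgebra.single (σ * extPerm (Fin.castLEEmb hdn) pemb) (1:ℂ) * _root_.antisymmetrizer n d hdn
        * MonoidAlgebra.single (extPerm (Fin.castLEEmb hdn) pemb)⁻¹ 1
      = ∑ τ : Equiv.Perm (Fin (d+1)), ((Equiv.Perm.sign τ : ℤ) : ℂ) •
          MonoidAlgebra.single (σ * τ.viaFintypeEmbedding pemb) (1:ℂ) := by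
  set u := extPerm (Fin.castLEEmb hdn) pemb with hu
  have hspec : ∀ a, u (Fin.castLEEmb hdn a) = pemb a := extPerm_apply _ _
  rw [_root_.antisymmetrizer, Finset.mul_sum, Finset.sum_mul]
  refine Finset.sum_congr rfl fun τ _ => ?_
  rw [mul_smul_comm, smul_mul_assoc]
  congr 1
  rw [MonoidAlgebra.of_apply, MonoidAlgebra.single_mul_single, MonoidAlgebra.single_mul_single,
    one_mul, one_mul]
  congr 1
  rw [mul_assoc, mul_assoc]
  rw [← conj_via (Fin.castLEEmb hdn) pemb u hspec τ]
  group

lemma key_mul_via_lt (hn : 0 < n) (σ : Equiv.Perm (Fin n)) (P : Finset (Fin n)) (hcard : P.card = d+1)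
    (hpat : ∀ i ∈ P, ∀ j ∈ P, i < j → σ j < σ i) (τ : Equiv.Perm (Fin (d+1))) (hτ : τ ≠ 1) :
    key (σ * τ.viaFintypeEmbedding (P.orderEmbOfFin hcard).toEmbedding) < key σ := by
  classical
  set pe := (P.orderEmbOfFin hcard).toEmbedding with hpe
  have hpe_apply : ∀ j, pe j = P.orderEmbOfFin hcard j := fun j => rfl
  have hpemem : ∀ j, pe j ∈ P := fun j => Finset.orderEmbOfFin_mem P hcard j
  have hpelt : ∀ {a b : Fin (d+1)}, a < b → pe a < pe b :=
    fun hab => (P.orderEmbOfFin hcard).strictMono hab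
  have hpelt' : ∀ {a b : Fin (d+1)}, pe a < pe b → a < b := by
    intro a b hab
    rcases lt_trichotomy a b with h | h | h
    · exact h
    · subst h; exact absurd hab (lt_irrefl _)
    · exact absurd (hpelt h) (not_lt.2 hab.le)
  set M := Finset.univ.filter (fun j : Fin (d+1) => τ j ≠ j) with hM
  have hMne : M.Nonempty := by
    by_contra hemp
    rw [Finset.not_nonempty_iff_eq_empty] at hemp
    refine hτ (Equiv.ext fun j => ?_)
    simp only [Equiv.Perm.one_apply]
    by_contra hj
    have : j ∈ M := by simp [hM, hj]
    rw [hemp] at this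
    exact absurd this (Finset.notMem_empty _)
  set j₀ := M.min' hMne with hj₀def
  have hj₀M : j₀ ∈ M := M.min'_mem hMne
  have hj₀ : τ j₀ ≠ j₀ := by
    have := Finset.mem_filter.1 hj₀M
    exact this.2
  have hfix : ∀ j, j < j₀ → τ j = j := by
    intro j hj
    by_contra hne
    have : j ∈ M := by simp [hM, hne]
    exact absurd (M.min'_le j this) (not_le.2 hj)
  have hgt : j₀ < τ j₀ := by
    rcases lt_trichotomy (τ j₀) j₀ with hlt | heq | hgt
    · have h1 : τ (τ j₀) = τ j₀ := hfix _ hlt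
      exact absurd (τ.injective h1) hj₀
    · exact absurd heq hj₀
    · exact hgt
  refine key_lt_key hn (pe j₀) ?_ ?_
  · -- positions before pe j₀ agree
    intro r hr
    rw [Equiv.Perm.mul_apply]
    by_cases hrange : r ∈ Set.range ⇑pe
    · obtain ⟨j, rfl⟩ := hrange
      have hj : j < j₀ := hpelt' hr
      rw [Equiv.Perm.viaFintypeEmbedding_apply_image, hfix j hj]
    · rw [Equiv.Perm.viaFintypeEmbedding_apply_notMem_range _ _ hrange]
  · -- strictly smaller at pe j₀
    rw [Equiv.Perm.mul_apply, Equiv.Perm.viaFintypeEmbedding_apply_image]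
    exact hpat (pe j₀) (hpemem j₀) (pe (τ j₀)) (hpemem (τ j₀)) (hpelt hgt)

end Antisym

section Straighten

variable {d : ℕ}

/-- `w` is supported on permutations with no decreasing subsequence of length `d+1`. -/
def Supp (d : ℕ) (w : MonoidAlgebra ℂ (Equiv.Perm (Fin n))) : Prop :=
  ∀ σ, ¬ Good d σ → w.coeff σ = 0

/-- `x` decomposes as an ideal element plus a `Good`-supported element. -/
def Dec (hdn : d + 1 ≤ n) (x : MonoidAlgebra ℂ (Equiv.Perm (Fin n))) : Prop :=
  ∃ y w, y ∈ TwoSidedIdeal.span {antisymmetrizer n d hdn} ∧ Supp d w ∧ x = y + w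

variable {hdn : d + 1 ≤ n}

lemma Dec.zero : Dec hdn (0 : MonoidAlgebra ℂ (Equiv.Perm (Fin n))) :=
  ⟨0, 0, TwoSidedIdeal.zero_mem _, fun σ _ => rfl, by simp⟩

lemma Dec.add {x₁ x₂} (h₁ : Dec hdn x₁) (h₂ : Dec hdn x₂) : Dec hdn (x₁ + x₂) := by
  obtain ⟨y₁, w₁, hy₁, hw₁, rfl⟩ := h₁
  obtain ⟨y₂, w₂, hy₂, hw₂, rfl⟩ := h₂
  refine ⟨y₁ + y₂, w₁ + w₂, TwoSidedIdeal.add_mem _ hy₁ hy₂, fun σ hσ => ?_, by abel⟩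
  rw [MonoidAlgebra.coeff_add, Finsupp.add_apply, hw₁ σ hσ, hw₂ σ hσ, add_zero]

lemma Dec.smul {x} (c : ℂ) (h : Dec hdn x) : Dec hdn (c • x) := by
  obtain ⟨y, w, hy, hw, rfl⟩ := h
  refine ⟨c • y, c • w, ?_, fun σ hσ => ?_, by rw [smul_add]⟩
  · rw [Algebra.smul_def]
    exact TwoSidedIdeal.mul_mem_left _ _ _ hy
  · rw [MonoidAlgebra.coeff_smul_apply, hw σ hσ, smul_zero]

lemma Dec.neg {x} (h : Dec hdn x) : Dec hdn (-x) := by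
  have := Dec.smul (-1 : ℂ) h
  simpa using this

lemma Dec.sub {x₁ x₂} (h₁ : Dec hdn x₁) (h₂ : Dec hdn x₂) : Dec hdn (x₁ - x₂) := by
  rw [sub_eq_add_neg]; exact h₁.add h₂.neg

lemma Dec.sum {α : Type*} (s : Finset α) (f : α → MonoidAlgebra ℂ (Equiv.Perm (Fin n)))
    (h : ∀ a ∈ s, Dec hdn (f a)) : Dec hdn (∑ a ∈ s, f a) := by
  classical
  induction s using Finset.induction_on with
  | empty => simpa using Dec.zero
  | insert _ _ hnotmem ih =>
    rw [Finset.sum_insert hnotmem]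
    exact (h _ (Finset.mem_insert_self _ _)).add
      (ih fun a ha => h a (Finset.mem_insert_of_mem ha))

lemma Dec.of_mem {x} (hx : x ∈ TwoSidedIdeal.span {antisymmetrizer n d hdn}) : Dec hdn x :=
  ⟨x, 0, hx, fun σ _ => rfl, by simp⟩

lemma dec_single (hdn : d + 1 ≤ n) (σ : Equiv.Perm (Fin n)) :
    Dec hdn (MonoidAlgebra.single σ (1 : ℂ)) := by
  classical
  have hn : 0 < n := lt_of_lt_of_le (Nat.succ_pos d) hdn
  suffices H : ∀ N (σ : Equiv.Perm (Fin n)), key σ = N →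
      Dec hdn (MonoidAlgebra.single σ (1 : ℂ)) from H _ σ rfl
  intro N
  induction N using Nat.strong_induction_on with
  | _ N IH =>
  intro σ hkey
  by_cases hg : Good d σ
  · refine ⟨0, MonoidAlgebra.single σ 1, TwoSidedIdeal.zero_mem _, fun τ hτ => ?_, by simp⟩
    rw [MonoidAlgebra.coeff_single, Finsupp.single_apply]
    rw [if_neg]
    intro heq
    exact hτ (heq ▸ hg)
  · obtain ⟨P, hcard, hpat⟩ := not_not.mp hg
    set pe := (P.orderEmbOfFin hcard).toEmbedding with hpe
    set u := extPerm (Fin.castLEEmb hdn) pe with hu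
    have hexp := single_mul_antisym hdn pe σ
    have h1term : ((Equiv.Perm.sign (1 : Equiv.Perm (Fin (d+1))) : ℤ) : ℂ) •
        MonoidAlgebra.single (σ * (1 : Equiv.Perm (Fin (d+1))).viaFintypeEmbedding pe) (1:ℂ)
          = MonoidAlgebra.single σ 1 := by
      rw [Equiv.Perm.viaFintypeEmbedding, Equiv.Perm.extendDomain_one, mul_one, map_one]
      norm_num
    have hsplit : ∑ τ : Equiv.Perm (Fin (d+1)), ((Equiv.Perm.sign τ : ℤ) : ℂ) •
          MonoidAlgebra.single (σ * τ.viaFintypeEmbedding pe) (1:ℂ)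
        = MonoidAlgebra.single σ 1 + ∑ τ ∈ Finset.univ.erase (1 : Equiv.Perm (Fin (d+1))),
            ((Equiv.Perm.sign τ : ℤ) : ℂ) •
              MonoidAlgebra.single (σ * τ.viaFintypeEmbedding pe) (1:ℂ) := by
      rw [← h1term]
      exact (Finset.add_sum_erase _ _ (Finset.mem_univ 1)).symm
    have hmain : MonoidAlgebra.single σ (1:ℂ)
        = (MonoidAlgebra.single (σ * u) (1:ℂ) * antisymmetrizer n d hdn
            * MonoidAlgebra.single u⁻¹ 1)
          - ∑ τ ∈ Finset.univ.erase (1 : Equiv.Perm (Fin (d+1))),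
              ((Equiv.Perm.sign τ : ℤ) : ℂ) •
                MonoidAlgebra.single (σ * τ.viaFintypeEmbedding pe) (1:ℂ) := by
      rw [hexp, hsplit]
      abel
    rw [hmain]
    refine Dec.sub (Dec.of_mem ?_) (Dec.sum _ _ fun τ hτ => ?_)
    · refine TwoSidedIdeal.mul_mem_right _ _ _ ?_
      refine TwoSidedIdeal.mul_mem_left _ _ _ ?_
      exact TwoSidedIdeal.subset_span rfl
    · refine Dec.smul _ ?_
      have hlt : key (σ * τ.viaFintypeEmbedding pe) < N := by
        rw [← hkey]
        exact key_mul_via_lt hn σ P hcard hpat τ (Finset.ne_of_mem_erase hτ)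
      exact IH _ hlt _ rfl

lemma dec_all (hdn : d + 1 ≤ n) (x : MonoidAlgebra ℂ (Equiv.Perm (Fin n))) : Dec hdn x := by
  induction x using MonoidAlgebra.induction_linear with
  | zero => exact Dec.zero
  | add x y hx hy => exact hx.add hy
  | single σ b =>
    have := (dec_single hdn σ).smul b
    rwa [MonoidAlgebra.smul_single', mul_one] at this

end Straighten

section Indep

variable {d : ℕ}

lemma supp_eq_zero (hn : 0 < n) {w : MonoidAlgebra ℂ (Equiv.Perm (Fin n))}
    (hsupp : Supp d w)
    (hsum : ∀ f g : Fin n → Fin d, ∑ σ : Equiv.Perm (Fin n),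
      (if (∀ i, f (σ⁻¹ i) = g i) then w.coeff σ else 0) = 0) :
    w = 0 := by
  classical
  suffices H : ∀ N (σ : Equiv.Perm (Fin n)), n ^ n - key σ = N → w.coeff σ = 0 by
    refine MonoidAlgebra.ext (Finsupp.ext fun σ => ?_)
    rw [MonoidAlgebra.coeff_zero, Finsupp.coe_zero, Pi.zero_apply]
    exact H _ σ rfl
  intro N
  induction N using Nat.strong_induction_on with
  | _ N IH =>
  intro σ₀ hN
  by_cases hg : Good d σ₀
  swap
  · exact hsupp σ₀ hg
  have hl1 : ∀ i, 1 ≤ dlen σ₀ i := one_le_dlen σ₀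
  have hld : ∀ i, dlen σ₀ i ≤ d := dlen_le σ₀ hg
  set col : Fin n → Fin d := fun i => ⟨dlen σ₀ i - 1, by have := hl1 i; have := hld i; omega⟩
    with hcol
  have hcol_mono : ∀ {i j : Fin n}, i < j → col i = col j → σ₀ i < σ₀ j := by
    intro i j hij hc
    have hd_eq : dlen σ₀ i = dlen σ₀ j := by
      have h1 := hl1 i; have h2 := hl1 j
      have h3 := congrArg Fin.val hc
      simp only [hcol] at h3
      omega
    rcases lt_trichotomy (σ₀ i) (σ₀ j) with hlt | heq | hgt
    · exact hlt
    · exact absurd (σ₀.injective heq) hij.ne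
    · exact absurd (dlen_lt_dlen σ₀ hij hgt) (by omega)
  have hs := hsum col (fun i => col (σ₀⁻¹ i))
  rw [← Finset.add_sum_erase _ _ (Finset.mem_univ σ₀)] at hs
  rw [if_pos (fun i => rfl)] at hs
  have hrest : ∀ σ ∈ Finset.univ.erase σ₀,
      (if (∀ i, col (σ⁻¹ i) = col (σ₀⁻¹ i)) then w.coeff σ else 0) = 0 := by
    intro σ hσ
    by_cases hcond : ∀ i, col (σ⁻¹ i) = col (σ₀⁻¹ i)
    swap
    · rw [if_neg hcond]
    rw [if_pos hcond]
    have hne : σ ≠ σ₀ := Finset.ne_of_mem_erase hσ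
    set hp : Equiv.Perm (Fin n) := σ₀⁻¹ * σ with hhp
    have hσh : σ = σ₀ * hp := by rw [hhp]; group
    have hcol_h : ∀ i, col (hp i) = col i := by
      intro i
      have hc := hcond (σ i)
      have h1 : σ⁻¹ (σ i) = i := by simp
      have h2 : hp i = σ₀⁻¹ (σ i) := by rw [hhp]; rfl
      rw [h1] at hc
      rw [h2, ← hc]
    have hne_h : hp ≠ 1 := by
      intro h1
      exact hne (by rw [hσh, h1, mul_one])
    set D := Finset.univ.filter (fun p : Fin n => σ p ≠ σ₀ p) with hD
    have hDne : D.Nonempty := by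
      by_contra hemp
      rw [Finset.not_nonempty_iff_eq_empty] at hemp
      refine hne (Equiv.ext fun p => ?_)
      by_contra hpne
      have : p ∈ D := by simp [hD, hpne]
      rw [hemp] at this
      exact absurd this (Finset.notMem_empty _)
    set q := D.min' hDne with hq
    have hqD : σ q ≠ σ₀ q := (Finset.mem_filter.1 (D.min'_mem hDne)).2
    have hbefore : ∀ p, p < q → σ p = σ₀ p := by
      intro p hplt
      by_contra hne'
      exact absurd (D.min'_le p (by simp [hD, hne'])) (not_le.2 hplt)
    have hfix : ∀ p, p < q → hp p = p := by
      intro p hplt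
      have : σ₀ (hp p) = σ₀ p := by
        rw [← Equiv.Perm.mul_apply, ← hσh]
        exact hbefore p hplt
      exact σ₀.injective this
    have hhq : hp q ≠ q := by
      intro hqq
      exact hqD (by rw [hσh, Equiv.Perm.mul_apply, hqq])
    have hgt : q < hp q := by
      rcases lt_trichotomy (hp q) q with hlt | heq | hgt
      · have h1 : hp (hp q) = hp q := hfix _ hlt
        exact absurd (hp.injective h1) hhq
      · exact absurd heq hhq
      · exact hgt
    have hkey_lt : key σ₀ < key σ := by
      refine key_lt_key hn q (fun p hplt => (hbefore p hplt).symm) ?_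
      have := hcol_mono hgt (hcol_h q).symm
      rw [hσh, Equiv.Perm.mul_apply]
      exact this
    have h1 := key_lt_pow hn σ₀
    have h2 := key_lt_pow hn σ
    exact IH (n^n - key σ) (by omega) σ rfl
  rw [Finset.sum_eq_zero hrest, add_zero] at hs
  exact hs

end Indep

section Analysis

variable {d : ℕ} (V : Type*) [AddCommGroup V] [Module ℂ V] [FiniteDimensional ℂ V]

/-- The representation `ℂ[Sₙ] → End(V^⊗n)`. -/
noncomputable abbrev rho : MonoidAlgebra ℂ (Equiv.Perm (Fin n)) →ₐ[ℂ]
    Module.End ℂ (⨂[ℂ] _ : Fin n, V) :=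
  MonoidAlgebra.lift ℂ (Module.End ℂ (⨂[ℂ] _ : Fin n, V)) (Equiv.Perm (Fin n)) (tensorPermHom n V)

lemma tensorPermHom_tprod (σ : Equiv.Perm (Fin n)) (v : Fin n → V) :
    tensorPermHom n V σ (PiTensorProduct.tprod ℂ v)
      = PiTensorProduct.tprod ℂ (fun i => v (σ⁻¹ i)) := by
  show (PiTensorProduct.reindex ℂ (fun _ : Fin n => V) σ).toLinearMap (PiTensorProduct.tprod ℂ v) = _
  rw [LinearEquiv.coe_toLinearMap, PiTensorProduct.reindex_tprod]
  rfl

lemma rho_apply_tprod (x : MonoidAlgebra ℂ (Equiv.Perm (Fin n))) (v : Fin n → V) :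
    rho V x (PiTensorProduct.tprod ℂ v)
      = ∑ σ : Equiv.Perm (Fin n), x.coeff σ • PiTensorProduct.tprod ℂ (fun i => v (σ⁻¹ i)) := by
  classical
  rw [MonoidAlgebra.lift_apply]
  rw [Finsupp.sum_fintype _ _ (fun g => by rw [zero_smul])]
  rw [LinearMap.coe_sum, Finset.sum_apply]
  refine Finset.sum_congr rfl fun σ _ => ?_
  rw [LinearMap.smul_apply, tensorPermHom_tprod]

variable (hV : Module.finrank ℂ V = d)

/-- A basis of `V` indexed by `Fin d`. -/
noncomputable def bV : Module.Basis (Fin d) ℂ V :=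
  (Module.finBasis ℂ V).reindex (finCongr hV)

/-- The product-of-coordinates functional on `V^⊗n` attached to `g : Fin n → Fin d`. -/
noncomputable def lam (g : Fin n → Fin d) : (⨂[ℂ] _ : Fin n, V) →ₗ[ℂ] ℂ :=
  PiTensorProduct.lift
    ((MultilinearMap.mkPiAlgebra ℂ (Fin n) ℂ).compLinearMap (fun i => (bV V hV).coord (g i)))

lemma lam_tprod (g : Fin n → Fin d) (v : Fin n → V) :
    lam V hV g (PiTensorProduct.tprod ℂ v) = ∏ i, (bV V hV).coord (g i) (v i) := by
  rw [lam, PiTensorProduct.lift.tprod, MultilinearMap.compLinearMap_apply,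
    MultilinearMap.mkPiAlgebra_apply]

lemma lam_tprod_basis (g f : Fin n → Fin d) :
    lam V hV g (PiTensorProduct.tprod ℂ (fun i => bV V hV (f i)))
      = if (∀ i, f i = g i) then 1 else 0 := by
  rw [lam_tprod]
  have : ∀ i, (bV V hV).coord (g i) (bV V hV (f i)) = if f i = g i then 1 else 0 := by
    intro i
    rw [Module.Basis.coord_apply, Module.Basis.repr_self, Finsupp.single_apply]
  rw [Finset.prod_congr rfl fun i _ => this i, Finset.prod_boole]
  by_cases hc : ∀ i, f i = g i
  · rw [if_pos fun i _ => hc i, if_pos hc]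
  · rw [if_neg, if_neg hc]
    intro hc'
    exact hc fun i => hc' i (Finset.mem_univ i)

lemma tprod_expand (v : Fin n → V) :
    PiTensorProduct.tprod ℂ v
      = ∑ f : Fin n → Fin d, (∏ i, (bV V hV).repr (v i) (f i)) •
          PiTensorProduct.tprod ℂ (fun i => bV V hV (f i)) := by
  classical
  have h1 : v = fun i => ∑ k : Fin d, (bV V hV).repr (v i) k • bV V hV k := by
    funext i
    exact ((bV V hV).sum_repr (v i)).symm
  conv_lhs => rw [h1]
  rw [MultilinearMap.map_sum]
  refine Finset.sum_congr rfl fun f _ => ?_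
  exact MultilinearMap.map_smul_univ _ _ _

include hV in
lemma ker_sums {x : MonoidAlgebra ℂ (Equiv.Perm (Fin n))} (hx : rho V x = 0)
    (f g : Fin n → Fin d) :
    ∑ σ : Equiv.Perm (Fin n), (if (∀ i, f (σ⁻¹ i) = g i) then x.coeff σ else 0) = 0 := by
  classical
  have h0 : rho V x (PiTensorProduct.tprod ℂ (fun i => bV V hV (f i))) = 0 := by
    rw [hx]; rfl
  rw [rho_apply_tprod] at h0
  have h1 := congrArg (lam V hV g) h0
  rw [map_sum, map_zero] at h1
  have h2 : ∀ σ : Equiv.Perm (Fin n),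
      lam V hV g (x.coeff σ • PiTensorProduct.tprod ℂ (fun i => bV V hV (f (σ⁻¹ i))))
        = (if (∀ i, f (σ⁻¹ i) = g i) then x.coeff σ else 0) := by
    intro σ
    rw [map_smul, lam_tprod_basis V hV g (fun i => f (σ⁻¹ i))]
    simp only [smul_eq_mul, mul_ite, mul_one, mul_zero]
  rw [Finset.sum_congr rfl fun σ _ => h2 σ] at h1
  exact h1

lemma rho_antisym_basis (hdn : d + 1 ≤ n) (f : Fin n → Fin d) :
    ∑ τ : Equiv.Perm (Fin (d+1)), ((Equiv.Perm.sign τ : ℤ) : ℂ) •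
        PiTensorProduct.tprod ℂ
          (fun i => bV V hV (f ((τ.viaFintypeEmbedding (Fin.castLEEmb hdn))⁻¹ i))) = 0 := by
  classical
  obtain ⟨j₁, j₂, hne12, hfeq⟩ := Fintype.exists_ne_map_eq_of_card_lt
    (fun j : Fin (d+1) => f (Fin.castLEEmb hdn j)) (by simp)
  set s := Equiv.swap j₁ j₂ with hs
  have hκ : ∀ j, f (Fin.castLEEmb hdn (s j)) = f (Fin.castLEEmb hdn j) := by
    intro j
    rcases eq_or_ne j j₁ with rfl | h1
    · rw [hs, Equiv.swap_apply_left]; exact hfeq.symm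
    rcases eq_or_ne j j₂ with rfl | h2
    · rw [hs, Equiv.swap_apply_right]; exact hfeq
    · rw [hs, Equiv.swap_apply_of_ne_of_ne h1 h2]
  have hsf : ∀ (τ : Equiv.Perm (Fin (d+1))) (i : Fin n),
      f (((τ * s).viaFintypeEmbedding (Fin.castLEEmb hdn))⁻¹ i)
        = f ((τ.viaFintypeEmbedding (Fin.castLEEmb hdn))⁻¹ i) := by
    intro τ i
    have hmul : (τ * s).viaFintypeEmbedding (Fin.castLEEmb hdn)
        = τ.viaFintypeEmbedding (Fin.castLEEmb hdn) * s.viaFintypeEmbedding (Fin.castLEEmb hdn) := by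
      simp only [Equiv.Perm.viaFintypeEmbedding]
      rw [Equiv.Perm.extendDomain_mul]
    rw [hmul, mul_inv_rev, Equiv.Perm.mul_apply]
    set i' := (τ.viaFintypeEmbedding (Fin.castLEEmb hdn))⁻¹ i
    have hsinv : (s.viaFintypeEmbedding (Fin.castLEEmb hdn))⁻¹
        = s.viaFintypeEmbedding (Fin.castLEEmb hdn) := by
      simp only [Equiv.Perm.viaFintypeEmbedding]
      rw [Equiv.Perm.extendDomain_inv, hs, Equiv.swap_inv]
    rw [hsinv]
    by_cases hrange : i' ∈ Set.range ⇑(Fin.castLEEmb hdn)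
    · obtain ⟨j, hj⟩ := hrange
      rw [← hj, Equiv.Perm.viaFintypeEmbedding_apply_image]
      exact hκ j
    · rw [Equiv.Perm.viaFintypeEmbedding_apply_notMem_range _ _ hrange]
  refine Finset.sum_ninvolution (fun τ => τ * s) ?_ ?_ (fun τ => Finset.mem_univ _) ?_
  · intro τ
    have hsign : ((Equiv.Perm.sign (τ * s) : ℤ) : ℂ) = -((Equiv.Perm.sign τ : ℤ) : ℂ) := by
      rw [Equiv.Perm.sign_mul, hs, Equiv.Perm.sign_swap hne12]
      push_cast
      ring
    rw [hsign]
    have : (fun i => bV V hV (f (((τ * s).viaFintypeEmbedding (Fin.castLEEmb hdn))⁻¹ i)))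
        = (fun i => bV V hV (f ((τ.viaFintypeEmbedding (Fin.castLEEmb hdn))⁻¹ i))) := by
      funext i; rw [hsf τ i]
    rw [this]
    rw [neg_smul]
    abel
  · intro τ _
    intro heq
    have hs1 : s = 1 := by
      have h' : τ * s = τ * 1 := by rw [mul_one]; exact heq
      exact mul_left_cancel h'
    rw [hs] at hs1
    have h2 := congrArg (fun p => p j₁) hs1
    simp only [Equiv.swap_apply_left, Equiv.Perm.one_apply] at h2
    exact hne12 h2.symm
  · intro τ
    show τ * s * s = τ
    rw [mul_assoc, hs, Equiv.swap_mul_self, mul_one]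

include hV in
lemma rho_antisym_zero (hdn : d + 1 ≤ n) :
    rho V (antisymmetrizer n d hdn) = 0 := by
  classical
  rw [antisymmetrizer, map_sum]
  have hterm : ∀ τ : Equiv.Perm (Fin (d+1)),
      rho V (((Equiv.Perm.sign τ : ℤ) : ℂ) • MonoidAlgebra.of ℂ (Equiv.Perm (Fin n))
          (τ.viaFintypeEmbedding (Fin.castLEEmb hdn)))
        = ((Equiv.Perm.sign τ : ℤ) : ℂ) • tensorPermHom n V (τ.viaFintypeEmbedding (Fin.castLEEmb hdn)) := by
    intro τ
    rw [map_smul, MonoidAlgebra.lift_of]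
  rw [Finset.sum_congr rfl fun τ _ => hterm τ]
  refine PiTensorProduct.ext (MultilinearMap.ext fun v => ?_)
  simp only [LinearMap.compMultilinearMap_apply, LinearMap.zero_apply]
  rw [tprod_expand V hV v, map_sum]
  refine Finset.sum_eq_zero fun f _ => ?_
  rw [map_smul]
  have hLf : (∑ τ : Equiv.Perm (Fin (d+1)), ((Equiv.Perm.sign τ : ℤ) : ℂ) •
      tensorPermHom n V (τ.viaFintypeEmbedding (Fin.castLEEmb hdn)))
        (PiTensorProduct.tprod ℂ (fun i => bV V hV (f i)))
      = ∑ τ : Equiv.Perm (Fin (d+1)), ((Equiv.Perm.sign τ : ℤ) : ℂ) •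
          PiTensorProduct.tprod ℂ
            (fun i => bV V hV (f ((τ.viaFintypeEmbedding (Fin.castLEEmb hdn))⁻¹ i))) := by
    rw [LinearMap.coe_sum, Finset.sum_apply]
    refine Finset.sum_congr rfl fun τ _ => ?_
    rw [LinearMap.smul_apply, tensorPermHom_tprod]
  rw [hLf, rho_antisym_basis V hV hdn f, smul_zero]

end Analysis

end SWaux

/-- If `dim V = d < n`, the kernel of `ℂ[Sₙ] → End(V^⊗n)` is the two-sided ideal
generated by the antisymmetrizer `A_{d+1}`. -/
theorem kernel_eq_twoSidedIdeal_antisymmetrizer (n d : ℕ) (h : d < n) (V : Type*)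
    [AddCommGroup V] [Module ℂ V] [FiniteDimensional ℂ V] (hV : Module.finrank ℂ V = d)
    (x : MonoidAlgebra ℂ (Equiv.Perm (Fin n))) :
    MonoidAlgebra.lift ℂ (Module.End ℂ (⨂[ℂ] _ : Fin n, V)) (Equiv.Perm (Fin n))
        (tensorPermHom n V) x = 0 ↔
      x ∈ TwoSidedIdeal.span {antisymmetrizer n d h} := by
  classical
  have hdn : d + 1 ≤ n := h
  have hn : 0 < n := lt_of_le_of_lt (Nat.zero_le d) h
  have hker : ∀ z ∈ TwoSidedIdeal.span {antisymmetrizer n d hdn}, SWaux.rho (n := n) V z = 0 := by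
    intro z hz
    have hsub : ({antisymmetrizer n d hdn} : Set (MonoidAlgebra ℂ (Equiv.Perm (Fin n))))
        ⊆ (TwoSidedIdeal.ker (SWaux.rho (n := n) V) : Set _) := by
      intro a ha
      rw [Set.mem_singleton_iff] at ha
      subst ha
      rw [SetLike.mem_coe, TwoSidedIdeal.mem_ker]
      exact SWaux.rho_antisym_zero V hV hdn
    have hmem := TwoSidedIdeal.mem_span_iff.mp hz _ hsub
    rwa [TwoSidedIdeal.mem_ker] at hmem
  constructor
  · intro hx
    obtain ⟨y, w, hy, hw, rfl⟩ := SWaux.dec_all hdn x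
    have hρw : SWaux.rho (n := n) V w = 0 := by
      have hsum : SWaux.rho (n := n) V (y + w) = 0 := hx
      rw [map_add, hker y hy, zero_add] at hsum
      exact hsum
    have hw0 : w = 0 :=
      SWaux.supp_eq_zero hn hw (fun f g => SWaux.ker_sums V hV hρw f g)
    rw [hw0, add_zero]
    exact hy
  · intro hx
    exact hker x hx
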